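/- Suppose there exists δ > 0 such that p_i > δ for all i ≥ 1. Then there exists a real number R > 1 such that E = ∩_{n=0}^{∞} q_{F_n}^{-1}(closed disk of center 0 and radius R), and also E = ∩_{n=0}^{∞} q_{F_n}^{-1}(open disk of center 0 and radius R). -/

import Mathlib

/-- `rr p n = r_n = p (⌊(n+1)/2⌋ + 1)`. -/
noncomputable def rr (p : ℕ → ℝ) (n : ℕ) : ℝ := p ((n+1)/2 + 1)

/-- `qF p z n = q_{F_n}(z)`. -/
noncomputable def qF (p : ℕ → ℝ) (z : ℂ) : ℕ → ℂ
  | 0 => (z - (1 - (p 1 : ℂ))) / (p 1 : ℂ)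
  | 1 => (1 / (p 2 : ℂ)) * (qF p z 0) ^ 2 - (1 / (p 2 : ℂ) - 1)
  | (n+2) => (1 / (rr p (n+2) : ℂ)) * qF p z (n+1) * qF p z n - (1 / (rr p (n+2) : ℂ) - 1)

/-- The fibered filled Julia set `E = {z : (q_{F_n}(z))ₙ is bounded}`. -/
def Eset (p : ℕ → ℝ) : Set ℂ := {z : ℂ | ∃ C : ℝ, ∀ n : ℕ, ‖qF p z n‖ ≤ C}

set_option maxHeartbeats 1000000 in
lemma aux_key (δ u r : ℝ) (hδ : 0 < δ) (hδ1 : δ < 1) (hu : δ * u = 1) (h1 : δ < r) (h2 : r ≤ 1)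
    (a b q : ℂ) (hq : q = (1/(r:ℂ))*a*b - (1/(r:ℂ)-1)) :
    ‖a‖*‖b‖ - u ≤ ‖q‖ ∧ ‖a‖*‖b‖ ≤ ‖q‖ + u ∧ ‖q‖ ≤ (‖a‖*‖b‖)*u + u := by
  have hr0 : 0 < r := hδ.trans h1
  have hu' : u = 1/δ := by field_simp at hu ⊢; linarith
  have h1r : 1 ≤ 1/r := by rw [le_div_iff₀ hr0]; linarith
  have hru : 1/r ≤ u := by rw [hu', div_le_div_iff₀ hr0 hδ]; nlinarith
  have hc1 : (1/(r:ℂ)) = ((1/r : ℝ) : ℂ) := by push_cast; ring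
  have hc2 : (1/(r:ℂ) - 1) = ((1/r - 1 : ℝ) : ℂ) := by push_cast; ring
  have hn1 : ‖(1/(r:ℂ))*a*b‖ = (1/r)*(‖a‖*‖b‖) := by
    rw [norm_mul, norm_mul, hc1, Complex.norm_real, Real.norm_of_nonneg (by positivity : (0:ℝ) ≤ 1/r)]
    ring
  have hn2 : ‖(1/(r:ℂ) - 1)‖ = 1/r - 1 := by
    rw [hc2, Complex.norm_real, Real.norm_of_nonneg (by linarith)]
  have hX : 0 ≤ ‖a‖*‖b‖ := by positivity
  have e1 : ‖(1/(r:ℂ))*a*b‖ - ‖(1/(r:ℂ) - 1)‖ ≤ ‖q‖ := by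
    rw [hq]; exact norm_sub_norm_le _ _
  have e2 : ‖q‖ ≤ ‖(1/(r:ℂ))*a*b‖ + ‖(1/(r:ℂ) - 1)‖ := by
    rw [hq]; exact norm_sub_le _ _
  have e3 : ‖(1/(r:ℂ))*a*b‖ ≤ ‖q‖ + ‖(1/(r:ℂ) - 1)‖ := by
    have : (1/(r:ℂ))*a*b = q + (1/(r:ℂ) - 1) := by rw [hq]; ring
    rw [this]; exact norm_add_le _ _
  rw [hn1, hn2] at e1 e2 e3
  refine ⟨?_, ?_, ?_⟩
  · nlinarith [mul_nonneg (by linarith : (0:ℝ) ≤ 1/r - 1) hX]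
  · nlinarith [mul_nonneg (by linarith : (0:ℝ) ≤ 1/r - 1) hX]
  · nlinarith [mul_nonneg (by linarith : (0:ℝ) ≤ u - 1/r) hX]

set_option maxHeartbeats 1000000 in
/-- Suppose `p i > δ > 0` for all `i ≥ 1`.  Then there is `R > 1`
with `E = ⋂ₙ q_{F_n}⁻¹(closedBall 0 R)` and also `E = ⋂ₙ q_{F_n}⁻¹(ball 0 R)`. -/
theorem stmt14 (p : ℕ → ℝ) (hp : ∀ i, 1 ≤ i → 0 < p i ∧ p i ≤ 1)
    (δ : ℝ) (hδ : 0 < δ) (hpδ : ∀ i, 1 ≤ i → δ < p i) :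
    ∃ R : ℝ, 1 < R ∧
      Eset p = ⋂ n : ℕ, (fun z : ℂ => qF p z n) ⁻¹' Metric.closedBall 0 R ∧
      Eset p = ⋂ n : ℕ, (fun z : ℂ => qF p z n) ⁻¹' Metric.ball 0 R := by
  have hδ1 : δ < 1 := lt_of_lt_of_le (hpδ 1 le_rfl) (hp 1 le_rfl).2
  set u : ℝ := 1/δ with hu
  have hδu : δ * u = 1 := by rw [hu, mul_one_div_cancel hδ.ne']
  have hu1 : 1 < u := by rw [hu, lt_div_iff₀ hδ]; linarith
  set S : ℝ := 2 + 2*u with hS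
  set T : ℝ := S + (S+u)^2*u with hT
  have hu0 : 0 < u := by linarith
  have hS4 : 4 < S := by rw [hS]; nlinarith
  have hSu : u < S := by rw [hS]; nlinarith
  have hT5S : 5*S ≤ T := by rw [hT]; nlinarith
  have hT0 : 0 < T := by nlinarith
  have hTSu : S + u + 2 ≤ δ*T := by
    have : δ*T = δ*S + (S+u)^2*(δ*u) := by rw [hT]; ring
    rw [this, hδu]; nlinarith
  have hT1 : 1 < T := by nlinarith
  have hrr : ∀ n : ℕ, δ < rr p n ∧ rr p n ≤ 1 := by
    intro n
    have h1 : 1 ≤ (n+1)/2 + 1 := Nat.le_add_left 1 _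
    exact ⟨hpδ _ h1, (hp _ h1).2⟩
  have recAB : ∀ (z : ℂ) (n : ℕ),
      ‖qF p z (n+1)‖ * ‖qF p z n‖ - u ≤ ‖qF p z (n+2)‖ ∧
      ‖qF p z (n+1)‖ * ‖qF p z n‖ ≤ ‖qF p z (n+2)‖ + u ∧
      ‖qF p z (n+2)‖ ≤ (‖qF p z (n+1)‖ * ‖qF p z n‖)*u + u := by
    intro z n
    exact aux_key δ u (rr p (n+2)) hδ hδ1 hδu (hrr (n+2)).1 (hrr (n+2)).2 _ _ _ rfl
  have rec01 : ∀ z : ℂ,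
      ‖qF p z 0‖ * ‖qF p z 0‖ - u ≤ ‖qF p z 1‖ ∧
      ‖qF p z 0‖ * ‖qF p z 0‖ ≤ ‖qF p z 1‖ + u ∧
      ‖qF p z 1‖ ≤ (‖qF p z 0‖ * ‖qF p z 0‖)*u + u := by
    intro z
    exact aux_key δ u (p 2) hδ hδ1 hδu (hpδ 2 (by norm_num)) (hp 2 (by norm_num)).2 _ _ _
      (by simp [qF]; ring)
  -- escape lemma
  have escape : ∀ (z : ℂ) (n : ℕ), T ≤ ‖qF p z n‖ → ∀ C : ℝ, ∃ m, C < ‖qF p z m‖ := by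
    intro z n hn
    have Bk : ∀ m, T ≤ ‖qF p z m‖ → ‖qF p z (m+1)‖ ≤ S → False := by
      intro m
      induction m using Nat.strong_induction_on with
      | _ m ih =>
        intro h1 h2
        obtain _ | (_ | n) := m
        · -- m = 0
          have hb := (rec01 z).1
          have hx0 : (0:ℝ) ≤ ‖qF p z 0‖ := norm_nonneg _
          nlinarith [mul_le_mul h1 h1 hT0.le hx0]
        · -- m = 1
          have hb := (recAB z 0).2.1
          have hc := (rec01 z).2.2
          set x := ‖qF p z 0‖ with hxd
          set y := ‖qF p z 1‖ with hyd
          have hx0 : (0:ℝ) ≤ x := norm_nonneg _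
          have hy0 : (0:ℝ) ≤ y := norm_nonneg _
          have hxy : x * y ≤ S + u := by
            have := (recAB z 0).2.1
            nlinarith [this, h2]
          have hax : δ * y ≤ x*x + 1 := by
            have h := mul_le_mul_of_nonneg_left hc hδ.le
            calc δ*y ≤ δ*((x*x)*u+u) := h
              _ = (x*x)*(δ*u) + δ*u := by ring
              _ = x*x + 1 := by rw [hδu]; ring
          have hx2 : S + u + 1 ≤ x*x := by nlinarith
          have hxT : x*T ≤ S + u := by nlinarith [mul_le_mul_of_nonneg_left h1 hx0]
          nlinarith [mul_le_mul hxT hxT (by positivity : (0:ℝ) ≤ x*T) (by nlinarith : (0:ℝ) ≤ S+u),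
            mul_le_mul_of_nonneg_right hx2 (mul_nonneg hT0.le hT0.le)]
        · -- m = n+2
          have hb := (recAB z (n+1)).2.1
          have hc := (recAB z n).2.2
          set x := ‖qF p z n‖
          set a := ‖qF p z (n+1)‖
          set y := ‖qF p z (n+2)‖
          have hx0 : (0:ℝ) ≤ x := norm_nonneg _
          have ha0 : (0:ℝ) ≤ a := norm_nonneg _
          have hy0 : (0:ℝ) ≤ y := norm_nonneg _
          have hay : a * y ≤ S + u := by nlinarith [hb, h2]
          have hax : δ * y ≤ a*x + 1 := by
            have h := mul_le_mul_of_nonneg_left hc hδ.le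
            calc δ*y ≤ δ*((a*x)*u+u) := h
              _ = (a*x)*(δ*u) + δ*u := by ring
              _ = a*x + 1 := by rw [hδu]; ring
          have haS : a ≤ S := by nlinarith [mul_le_mul_of_nonneg_left h1 ha0]
          have hTx : T ≤ x := by
            have h3 : (δ*y - 1)*y ≤ x*(S+u) := by
              calc (δ*y - 1)*y ≤ (a*x)*y := mul_le_mul_of_nonneg_right (by linarith) hy0
                _ = x*(a*y) := by ring
                _ ≤ x*(S+u) := mul_le_mul_of_nonneg_left hay hx0
            nlinarith [mul_le_mul (by nlinarith : S+u+1 ≤ δ*y - 1) h1 hT0.le (by nlinarith : (0:ℝ) ≤ δ*y-1)]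
          exact ih n (by omega) hTx haS
    have hn1 : S ≤ ‖qF p z (n+1)‖ := by
      by_contra h
      push_neg at h
      exact Bk n hn h.le
    have hn0 : S ≤ ‖qF p z n‖ := le_trans (by nlinarith) hn
    have Fw : ∀ k, S ≤ ‖qF p z (n+k)‖ ∧ 2^k * S ≤ ‖qF p z (n+k+1)‖ := by
      intro k
      induction k with
      | zero => exact ⟨hn0, by simpa using hn1⟩
      | succ k ihk =>
        obtain ⟨ha, hb⟩ := ihk
        have hA := (recAB z (n+k)).1
        have hk1 : (1:ℝ) ≤ 2^k := one_le_pow₀ (by norm_num)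
        constructor
        · have : S ≤ 2^k * S := by nlinarith
          exact le_trans this hb
        · have hmul : (2^k*S)*S ≤ ‖qF p z (n+k+1)‖ * ‖qF p z (n+k)‖ :=
            mul_le_mul hb ha (by positivity) (norm_nonneg _)
          have h2p : (2:ℝ)^(k+1) = 2*2^k := by ring
          have hexp : (2:ℝ)^k*S*S = 2*(2^k*S) + 2^k*(4*u+4*u^2) := by rw [hS]; ring
          show 2^(k+1) * S ≤ ‖qF p z (n+k+2)‖
          nlinarith [hA, hmul, hexp, h2p,
            mul_le_mul_of_nonneg_right hk1 (by positivity : (0:ℝ) ≤ 4*u + 4*u^2)]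
    intro C
    obtain ⟨k, hk⟩ := pow_unbounded_of_one_lt (C/S) (by norm_num : (1:ℝ) < 2)
    refine ⟨n+k+1, lt_of_lt_of_le ?_ (Fw k).2⟩
    calc C = (C/S)*S := by field_simp
      _ < 2^k * S := by exact mul_lt_mul_of_pos_right hk (by nlinarith)
  refine ⟨T, hT1, ?_, ?_⟩
  · apply Set.Subset.antisymm
    · intro z hz
      simp only [Set.mem_iInter, Set.mem_preimage, Metric.mem_closedBall, dist_zero_right]
      intro n
      by_contra hlt
      push_neg at hlt
      obtain ⟨C, hC⟩ := hz
      obtain ⟨m, hm⟩ := escape z n hlt.le C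
      exact absurd (hC m) (not_le.2 hm)
    · intro z hz
      simp only [Set.mem_iInter, Set.mem_preimage, Metric.mem_closedBall, dist_zero_right] at hz
      exact ⟨T, hz⟩
  · apply Set.Subset.antisymm
    · intro z hz
      simp only [Set.mem_iInter, Set.mem_preimage, Metric.mem_ball, dist_zero_right]
      intro n
      by_contra hlt
      push_neg at hlt
      obtain ⟨C, hC⟩ := hz
      obtain ⟨m, hm⟩ := escape z n hlt C
      exact absurd (hC m) (not_le.2 hm)
    · intro z hz
      simp only [Set.mem_iInter, Set.mem_preimage, Metric.mem_ball, dist_zero_right] at hz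
      exact ⟨T, fun n => (hz n).le⟩
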